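/- Let B and O be nonempty finite types, O_p ⊆ O a subset (with e : O_p → O the inclusion), let 0 < m ≤ M, and let K be a symmetric real matrix indexed by B ⊕ O with m·I ⪯ K ⪯ M·I. Let Δ be the real B × O matrix whose column indexed by o ∈ O equals the o-column of K_{BO_p}(K_{O_p})⁻¹ when o ∈ O_p and is zero when o ∈ O ∖ O_p, minus the o-column of K_{BO}(K_O)⁻¹. Then ‖Δ‖ ≤ (M²/m + M) · ‖(K⁻¹)_{B, O∖O_p}‖, where (K⁻¹)_{B, O∖O_p} is the submatrix of K⁻¹ with rows in B and columns in O ∖ O_p. -/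

import Mathlib

open Matrix

/-- The ℓ²→ℓ² operator norm of a real matrix (the norm induced by the Euclidean
norms on the domain and codomain). -/
noncomputable def l2OpNorm {α β : Type*} [Fintype α] [Fintype β] [DecidableEq β]
    (M : Matrix α β ℝ) : ℝ :=
  ‖LinearMap.toContinuousLinearMap (Matrix.toEuclideanLin M)‖

open Function
open scoped Matrix.Norms.L2Operator

set_option linter.unusedSectionVars false
section Toolkit
variable {α β α' β' : Type*} [Fintype α] [Fintype β] [Fintype α'] [Fintype β']

lemma l2OpNorm_eq_norm [DecidableEq β] (A : Matrix α β ℝ) : l2OpNorm A = ‖A‖ := rfl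

lemma dotProduct_self_nonneg' (v : α → ℝ) : 0 ≤ v ⬝ᵥ v :=
  Finset.sum_nonneg fun i _ => mul_self_nonneg (v i)

lemma euclid_norm_sq (x : EuclideanSpace ℝ α) :
    ‖x‖ ^ 2 = (fun i => x i) ⬝ᵥ (fun i => x i) := by
  rw [EuclideanSpace.norm_eq, Real.sq_sqrt (Finset.sum_nonneg fun i _ => sq_nonneg _)]
  simp [dotProduct, Real.norm_eq_abs, sq_abs, pow_two]

lemma l2OpNorm_le_of_dot [DecidableEq β] (A : Matrix α β ℝ) {c : ℝ} (hc : 0 ≤ c)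
    (h : ∀ v : β → ℝ, (A *ᵥ v) ⬝ᵥ (A *ᵥ v) ≤ c ^ 2 * (v ⬝ᵥ v)) : ‖A‖ ≤ c := by
  show l2OpNorm A ≤ c
  unfold l2OpNorm
  apply ContinuousLinearMap.opNorm_le_bound _ hc
  intro v
  rw [LinearMap.coe_toContinuousLinearMap']
  have h1 : ‖toEuclideanLin A v‖ ^ 2 ≤ (c * ‖v‖) ^ 2 := by
    rw [euclid_norm_sq (toEuclideanLin A v)]
    calc (fun i => toEuclideanLin A v i) ⬝ᵥ (fun i => toEuclideanLin A v i)
        = (A *ᵥ (fun i => v i)) ⬝ᵥ (A *ᵥ (fun i => v i)) := rfl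
      _ ≤ c ^ 2 * ((fun i => v i) ⬝ᵥ (fun i => v i)) := h (fun i => v i)
      _ = (c * ‖v‖) ^ 2 := by rw [mul_pow, euclid_norm_sq v]
  have h2 := Real.sqrt_le_sqrt h1
  rwa [Real.sqrt_sq (norm_nonneg _), Real.sqrt_sq (by positivity)] at h2

lemma transpose_eq_of_hermitian {X : Matrix β β ℝ} (hX : X.IsHermitian) : Xᵀ = X := by
  ext i j
  have h := congrFun (congrFun hX.eq i) j
  simp only [conjTranspose_apply, star_trivial] at h
  rw [transpose_apply, h]

lemma norm_le_of_psd [DecidableEq β] {X : Matrix β β ℝ} (hX : X.PosSemidef) {c : ℝ} (hc : 0 ≤ c)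
    (h2 : (c • (1 : Matrix β β ℝ) - X).PosSemidef) : ‖X‖ ≤ c := by
  obtain ⟨s, hs, hss⟩ : ∃ s : Matrix β β ℝ, sᴴ = s ∧ s * s = X :=
    open scoped MatrixOrder in
    ⟨CFC.sqrt X, (CFC.sqrt_nonneg X).posSemidef.isHermitian.eq, CFC.sqrt_mul_sqrt_self X hX.nonneg⟩
  subst hss
  apply l2OpNorm_le_of_dot _ hc
  intro v
  have key := h2.conjTranspose_mul_mul_same s
  rw [hs] at key
  have e1 : s * (c • (1 : Matrix β β ℝ) - s * s) * s = c • (s * s) - (s * s) * (s * s) := by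
    simp only [Matrix.mul_sub, Matrix.sub_mul, Matrix.mul_smul, Matrix.smul_mul, Matrix.mul_one]
    noncomm_ring
  rw [e1] at key
  have k1 := key.dotProduct_mulVec_nonneg v
  have k2 := h2.dotProduct_mulVec_nonneg v
  simp only [star_trivial, Matrix.sub_mulVec, Matrix.smul_mulVec, dotProduct_sub,
    dotProduct_smul, Matrix.one_mulVec, sub_nonneg, smul_eq_mul] at k1 k2
  have hsymm : (s * s)ᵀ = s * s := transpose_eq_of_hermitian hX.isHermitian
  have e2 : ((s * s) *ᵥ v) ⬝ᵥ ((s * s) *ᵥ v) = v ⬝ᵥ (((s * s) * (s * s)) *ᵥ v) := by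
    calc ((s * s) *ᵥ v) ⬝ᵥ ((s * s) *ᵥ v)
        = (v ᵥ* (s * s)) ⬝ᵥ ((s * s) *ᵥ v) := by rw [← Matrix.mulVec_transpose, hsymm]
      _ = v ⬝ᵥ ((s * s) *ᵥ ((s * s) *ᵥ v)) := (dotProduct_mulVec v (s * s) _).symm
      _ = v ⬝ᵥ (((s * s) * (s * s)) *ᵥ v) := by rw [Matrix.mulVec_mulVec]
  rw [e2]
  calc v ⬝ᵥ (((s * s) * (s * s)) *ᵥ v) ≤ c * (v ⬝ᵥ ((s * s) *ᵥ v)) := k1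
    _ ≤ c * (c * (v ⬝ᵥ v)) := by apply mul_le_mul_of_nonneg_left k2 hc
    _ = c ^ 2 * (v ⬝ᵥ v) := by ring

lemma smul_one_posDef [DecidableEq β] {c : ℝ} (hc : 0 < c) :
    (c • (1 : Matrix β β ℝ)).PosDef := by
  rw [Matrix.smul_one_eq_diagonal]
  exact Matrix.PosDef.diagonal fun _ => hc

lemma posDef_of_lo [DecidableEq β] {X : Matrix β β ℝ} {c : ℝ} (hc : 0 < c)
    (hlo : (X - c • (1 : Matrix β β ℝ)).PosSemidef) : X.PosDef := by
  have : X = (X - c • (1 : Matrix β β ℝ)) + c • 1 := by abel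
  rw [this]
  exact Matrix.PosDef.posSemidef_add hlo (smul_one_posDef hc)

lemma norm_inv_le_of_lo [DecidableEq β] {X : Matrix β β ℝ} {c : ℝ} (hc : 0 < c)
    (hlo : (X - c • (1 : Matrix β β ℝ)).PosSemidef) : ‖X⁻¹‖ ≤ 1 / c := by
  have hX : X.PosDef := posDef_of_lo hc hlo
  have hdet : IsUnit X.det := (Matrix.isUnit_iff_isUnit_det X).mp hX.isUnit
  apply l2OpNorm_le_of_dot _ (by positivity)
  intro v
  set w : β → ℝ := X⁻¹ *ᵥ v with hw
  have hv : X *ᵥ w = v := by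
    rw [hw, Matrix.mulVec_mulVec, Matrix.mul_nonsing_inv _ hdet, Matrix.one_mulVec]
  rw [← hv]
  have k2 := hlo.dotProduct_mulVec_nonneg w
  simp only [star_trivial, Matrix.sub_mulVec, Matrix.smul_mulVec, dotProduct_sub,
    dotProduct_smul, Matrix.one_mulVec, sub_nonneg, smul_eq_mul] at k2
  have cs : (w ⬝ᵥ (X *ᵥ w)) ^ 2 ≤ (w ⬝ᵥ w) * ((X *ᵥ w) ⬝ᵥ (X *ᵥ w)) := by
    have := Finset.sum_mul_sq_le_sq_mul_sq Finset.univ w (X *ᵥ w)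
    simpa [dotProduct, pow_two] using this
  have h0 := dotProduct_self_nonneg' w
  have h1 := dotProduct_self_nonneg' (X *ᵥ w)
  rcases eq_or_lt_of_le h0 with h | h
  · have hz : w ⬝ᵥ w = 0 := h.symm
    rw [hz]
    positivity
  · have sq1 : (c * (w ⬝ᵥ w)) ^ 2 ≤ (w ⬝ᵥ (X *ᵥ w)) ^ 2 :=
      pow_le_pow_left₀ (by positivity) k2 2
    have key : c ^ 2 * (w ⬝ᵥ w) ≤ (X *ᵥ w) ⬝ᵥ (X *ᵥ w) := by
      nlinarith [sq1, cs, h]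
    have hc2 : (0:ℝ) < c ^ 2 := by positivity
    rw [div_pow, one_pow, one_div, inv_mul_eq_div, le_div_iff₀ hc2]
    linarith [key]

section Sel
variable [DecidableEq α] [DecidableEq β] [DecidableEq α'] [DecidableEq β']
open scoped Classical

lemma sel_left_mulVec (f : α' → α) (v : α → ℝ) :
    ((1 : Matrix α α ℝ).submatrix f id) *ᵥ v = fun i => v (f i) := by
  ext i
  simp [Matrix.mulVec, dotProduct, Matrix.one_apply]

lemma norm_sel_left_le {f : α' → α} (hf : Function.Injective f) :
    ‖(1 : Matrix α α ℝ).submatrix f id‖ ≤ 1 := by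
  apply l2OpNorm_le_of_dot _ zero_le_one
  intro v
  rw [sel_left_mulVec]
  simp only [one_pow, one_mul, dotProduct]
  calc ∑ i, v (f i) * v (f i) = ∑ k ∈ Finset.univ.image f, v k * v k := by
        rw [Finset.sum_image (fun a _ b _ h => hf h)]
    _ ≤ ∑ k, v k * v k := Finset.sum_le_sum_of_subset_of_nonneg (Finset.subset_univ _)
        (fun k _ _ => mul_self_nonneg _)

lemma sel_right_eq_conjTranspose (g : β' → β) :
    (1 : Matrix β β ℝ).submatrix id g = ((1 : Matrix β β ℝ).submatrix g id)ᴴ := by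
  ext i j
  simp [Matrix.one_apply, eq_comm]

lemma norm_sel_right_le {g : β' → β} (hg : Function.Injective g) :
    ‖(1 : Matrix β β ℝ).submatrix id g‖ ≤ 1 := by
  rw [sel_right_eq_conjTranspose, Matrix.l2_opNorm_conjTranspose]
  exact norm_sel_left_le hg

lemma submatrix_eq_mul_mul (A : Matrix α β ℝ) (f : α' → α) (g : β' → β) :
    A.submatrix f g = (1 : Matrix α α ℝ).submatrix f id * A * (1 : Matrix β β ℝ).submatrix id g := by
  ext i j
  simp [Matrix.mul_apply, Matrix.one_apply, Finset.sum_ite_eq, Finset.sum_ite_eq']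

lemma norm_submatrix_le (A : Matrix α β ℝ) {f : α' → α} {g : β' → β}
    (hf : Function.Injective f) (hg : Function.Injective g) :
    ‖A.submatrix f g‖ ≤ ‖A‖ := by
  rw [submatrix_eq_mul_mul A f g]
  calc ‖(1 : Matrix α α ℝ).submatrix f id * A * (1 : Matrix β β ℝ).submatrix id g‖
      ≤ ‖(1 : Matrix α α ℝ).submatrix f id * A‖ * ‖(1 : Matrix β β ℝ).submatrix id g‖ :=
        Matrix.l2_opNorm_mul _ _
    _ ≤ ‖(1 : Matrix α α ℝ).submatrix f id * A‖ * 1 :=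
        mul_le_mul_of_nonneg_left (norm_sel_right_le hg) (norm_nonneg _)
    _ = ‖(1 : Matrix α α ℝ).submatrix f id * A‖ := mul_one _
    _ ≤ ‖(1 : Matrix α α ℝ).submatrix f id‖ * ‖A‖ := Matrix.l2_opNorm_mul _ _
    _ ≤ 1 * ‖A‖ := mul_le_mul_of_nonneg_right (norm_sel_left_le hf) (norm_nonneg _)
    _ = ‖A‖ := one_mul _

lemma mul_sel_apply (A : Matrix α β ℝ) {g : β' → β} (hg : Function.Injective g) (i : α) (o : β) :
    (A.submatrix id g * (1 : Matrix β β ℝ).submatrix g id) i o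
      = if ∃ j, g j = o then A i o else 0 := by
  rw [Matrix.mul_apply]
  simp only [Matrix.submatrix_apply, id_eq, Matrix.one_apply, mul_ite, mul_one, mul_zero]
  by_cases h : ∃ j, g j = o
  · obtain ⟨j0, hj0⟩ := h
    rw [if_pos ⟨j0, hj0⟩]
    rw [Finset.sum_eq_single j0]
    · rw [if_pos hj0, hj0]
    · intro j _ hj
      rw [if_neg]
      intro hc
      exact hj (hg (hj0 ▸ hc))
    · intro h'
      exact absurd (Finset.mem_univ j0) h'
  · rw [if_neg h]
    apply Finset.sum_eq_zero
    intro j _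
    rw [if_neg]
    exact fun hc => h ⟨j, hc⟩

lemma col_split {γ δ : Type*} [Fintype γ] [Fintype δ] [DecidableEq γ] [DecidableEq δ]
    (A : Matrix α β ℝ) {q : γ → β} {u : δ → β}
    (hq : Function.Injective q) (hu : Function.Injective u)
    (hcov : ∀ o : β, (∃ j, q j = o) ∨ (∃ j, u j = o))
    (hdis : ∀ o : β, (∃ j, q j = o) → (∃ j, u j = o) → False) :
    A = A.submatrix id q * (1 : Matrix β β ℝ).submatrix q id
        + A.submatrix id u * (1 : Matrix β β ℝ).submatrix u id := by
  ext i o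
  rw [Matrix.add_apply, mul_sel_apply A hq, mul_sel_apply A hu]
  rcases hcov o with h | h
  · rw [if_pos h, if_neg (fun h' => hdis o h h'), add_zero]
  · rw [if_pos h, if_neg (fun h' => hdis o h' h), zero_add]

lemma norm_le_col_split {γ δ : Type*} [Fintype γ] [Fintype δ] [DecidableEq γ] [DecidableEq δ]
    (A : Matrix α β ℝ) {q : γ → β} {u : δ → β}
    (hq : Function.Injective q) (hu : Function.Injective u)
    (hcov : ∀ o : β, (∃ j, q j = o) ∨ (∃ j, u j = o))
    (hdis : ∀ o : β, (∃ j, q j = o) → (∃ j, u j = o) → False) :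
    ‖A‖ ≤ ‖A.submatrix id q‖ + ‖A.submatrix id u‖ := by
  conv_lhs => rw [col_split A hq hu hcov hdis]
  calc ‖A.submatrix id q * (1 : Matrix β β ℝ).submatrix q id
        + A.submatrix id u * (1 : Matrix β β ℝ).submatrix u id‖
      ≤ ‖A.submatrix id q * (1 : Matrix β β ℝ).submatrix q id‖
        + ‖A.submatrix id u * (1 : Matrix β β ℝ).submatrix u id‖ := norm_add_le _ _
    _ ≤ ‖A.submatrix id q‖ * ‖(1 : Matrix β β ℝ).submatrix q id‖
        + ‖A.submatrix id u‖ * ‖(1 : Matrix β β ℝ).submatrix u id‖ :=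
        add_le_add (Matrix.l2_opNorm_mul _ _) (Matrix.l2_opNorm_mul _ _)
    _ ≤ ‖A.submatrix id q‖ * 1 + ‖A.submatrix id u‖ * 1 :=
        add_le_add (mul_le_mul_of_nonneg_left (norm_sel_left_le hq) (norm_nonneg _))
          (mul_le_mul_of_nonneg_left (norm_sel_left_le hu) (norm_nonneg _))
    _ = ‖A.submatrix id q‖ + ‖A.submatrix id u‖ := by ring

end Sel
end Toolkit

section Helpers
variable {α β α' γ γ' : Type*} [Fintype α] [Fintype β] [Fintype α'] [Fintype γ] [Fintype γ']

lemma one_submatrix_inj [DecidableEq α] [DecidableEq α'] {f : α' → α}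
    (hf : Function.Injective f) : (1 : Matrix α α ℝ).submatrix f f = 1 := by
  ext i j
  simp [Matrix.one_apply, hf.eq_iff]

lemma sub_smul_one_submatrix [DecidableEq α] [DecidableEq α'] (X : Matrix α α ℝ) (c : ℝ)
    {f : α' → α} (hf : Function.Injective f) :
    (X - c • (1 : Matrix α α ℝ)).submatrix f f = X.submatrix f f - c • (1 : Matrix α' α' ℝ) := by
  ext i j
  simp [Matrix.one_apply, hf.eq_iff]

lemma smul_one_sub_submatrix [DecidableEq α] [DecidableEq α'] (X : Matrix α α ℝ) (c : ℝ)
    {f : α' → α} (hf : Function.Injective f) :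
    (c • (1 : Matrix α α ℝ) - X).submatrix f f = c • (1 : Matrix α' α' ℝ) - X.submatrix f f := by
  ext i j
  simp [Matrix.one_apply, hf.eq_iff]

lemma submatrix_mul_split (A : Matrix α β ℝ) (Bm : Matrix β γ ℝ) (f : α' → α) (g : γ' → γ) :
    (A * Bm).submatrix f g = A.submatrix f id * Bm.submatrix id g := by
  ext i j
  simp [Matrix.mul_apply]

lemma posDef_of_lo_submatrix [DecidableEq α] [DecidableEq α'] {X : Matrix α α ℝ} {c : ℝ}
    (hc : 0 < c) (hlo : (X - c • (1 : Matrix α α ℝ)).PosSemidef) {f : α' → α}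
    (hf : Function.Injective f) : (X.submatrix f f).PosDef := by
  apply posDef_of_lo hc
  rw [← sub_smul_one_submatrix X c hf]
  exact hlo.submatrix f

end Helpers

section Schur
variable {α β : Type*} [Fintype α] [Fintype β] [DecidableEq α] [DecidableEq β]

lemma toBlocks21_eq_conj (N : Matrix (α ⊕ β) (α ⊕ β) ℝ) (h : N.IsHermitian) :
    N.toBlocks₂₁ = (N.toBlocks₁₂)ᴴ := by
  ext j b
  have h2 := congrFun (congrFun h.eq (Sum.inr j)) (Sum.inl b)
  simp only [conjTranspose_apply, star_trivial] at h2
  show N (Sum.inr j) (Sum.inl b) = N (Sum.inl b) (Sum.inr j)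
  exact h2.symm

lemma inv_blocks_of_isUnit (N : Matrix (α ⊕ β) (α ⊕ β) ℝ)
    (hN : IsUnit N) (h22 : IsUnit N.toBlocks₂₂) :
    IsUnit (N.toBlocks₁₁ - N.toBlocks₁₂ * N.toBlocks₂₂⁻¹ * N.toBlocks₂₁) ∧
    (N⁻¹).toBlocks₁₁ = (N.toBlocks₁₁ - N.toBlocks₁₂ * N.toBlocks₂₂⁻¹ * N.toBlocks₂₁)⁻¹ ∧
    (N⁻¹).toBlocks₁₂ = -((N.toBlocks₁₁ - N.toBlocks₁₂ * N.toBlocks₂₂⁻¹ * N.toBlocks₂₁)⁻¹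
        * N.toBlocks₁₂ * N.toBlocks₂₂⁻¹) := by
  set A := N.toBlocks₁₁
  set B := N.toBlocks₁₂
  set C := N.toBlocks₂₁
  set D := N.toBlocks₂₂
  letI iN := hN.invertible
  letI iD := h22.invertible
  have hfb : fromBlocks A B C D = N := fromBlocks_toBlocks N
  letI iN' : Invertible (fromBlocks A B C D) := hfb ▸ iN
  letI iS : Invertible (A - B * ⅟D * C) := invertibleOfFromBlocks₂₂Invertible A B C D
  have hD : ⅟D = D⁻¹ := invOf_eq_nonsing_inv D
  have hNinv : N⁻¹ = fromBlocks (⅟(A - B * ⅟D * C)) (-(⅟(A - B * ⅟D * C) * B * ⅟D))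
      (-(⅟D * C * ⅟(A - B * ⅟D * C))) (⅟D + ⅟D * C * ⅟(A - B * ⅟D * C) * B * ⅟D) := by
    have h1 : N⁻¹ = (fromBlocks A B C D)⁻¹ := by rw [hfb]
    rw [h1, ← invOf_eq_nonsing_inv (fromBlocks A B C D), invOf_fromBlocks₂₂_eq]
  refine ⟨?_, ?_, ?_⟩
  · have := isUnit_of_invertible (A - B * ⅟D * C)
    rwa [hD] at this
  · rw [hNinv, toBlocks_fromBlocks₁₁, invOf_eq_nonsing_inv, hD]
  · rw [hNinv, toBlocks_fromBlocks₁₂, invOf_eq_nonsing_inv, hD]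

lemma inv_blocks22_of_isUnit (N : Matrix (α ⊕ β) (α ⊕ β) ℝ)
    (hN : IsUnit N) (h11 : IsUnit N.toBlocks₁₁) :
    IsUnit (N.toBlocks₂₂ - N.toBlocks₂₁ * N.toBlocks₁₁⁻¹ * N.toBlocks₁₂) ∧
    (N⁻¹).toBlocks₂₂ = (N.toBlocks₂₂ - N.toBlocks₂₁ * N.toBlocks₁₁⁻¹ * N.toBlocks₁₂)⁻¹ := by
  set A := N.toBlocks₁₁
  set B := N.toBlocks₁₂
  set C := N.toBlocks₂₁
  set D := N.toBlocks₂₂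
  letI iN := hN.invertible
  letI iA := h11.invertible
  have hfb : fromBlocks A B C D = N := fromBlocks_toBlocks N
  letI iN' : Invertible (fromBlocks A B C D) := hfb ▸ iN
  letI iS : Invertible (D - C * ⅟A * B) := invertibleOfFromBlocks₁₁Invertible A B C D
  have hA : ⅟A = A⁻¹ := invOf_eq_nonsing_inv A
  have hNinv : N⁻¹ = fromBlocks (⅟A + ⅟A * B * ⅟(D - C * ⅟A * B) * C * ⅟A)
      (-(⅟A * B * ⅟(D - C * ⅟A * B))) (-(⅟(D - C * ⅟A * B) * C * ⅟A)) (⅟(D - C * ⅟A * B)) := by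
    have h1 : N⁻¹ = (fromBlocks A B C D)⁻¹ := by rw [hfb]
    rw [h1, ← invOf_eq_nonsing_inv (fromBlocks A B C D), invOf_fromBlocks₁₁_eq]
  refine ⟨?_, ?_⟩
  · have := isUnit_of_invertible (D - C * ⅟A * B)
    rwa [hA] at this
  · rw [hNinv, toBlocks_fromBlocks₂₂, invOf_eq_nonsing_inv, hA]

end Schur


set_option maxHeartbeats 2000000 in
theorem stmt3 {B O : Type*} [Fintype B] [Fintype O] [Nonempty B] [Nonempty O]
    [DecidableEq B] [DecidableEq O]
    (Op : Finset O)
    (m M : ℝ) (hm : 0 < m) (hmM : m ≤ M)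
    (K : Matrix (B ⊕ O) (B ⊕ O) ℝ) (hKsymm : K.IsSymm)
    (hKlo : (K - m • (1 : Matrix (B ⊕ O) (B ⊕ O) ℝ)).PosSemidef)
    (hKhi : (M • (1 : Matrix (B ⊕ O) (B ⊕ O) ℝ) - K).PosSemidef)
    (Δ : Matrix B O ℝ)
    (hΔ : Δ = Matrix.of fun b o =>
        (if h : o ∈ Op then
          (K.submatrix Sum.inl (fun j : Op => Sum.inr (j : O)) *
            (K.submatrix (fun i : Op => Sum.inr (i : O))
              (fun j : Op => Sum.inr (j : O)))⁻¹) b ⟨o, h⟩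
        else 0)
        - (K.submatrix Sum.inl Sum.inr * (K.submatrix Sum.inr Sum.inr)⁻¹) b o) :
    l2OpNorm Δ ≤ (M ^ 2 / m + M) *
      l2OpNorm ((K⁻¹).submatrix Sum.inl (fun j : ↥Opᶜ => Sum.inr (j : O))) := by
  classical
  have hM : (0:ℝ) < M := lt_of_lt_of_le hm hmM
  -- index maps
  set p : ↥Op → O := fun j => (j : O) with hp
  set er : ↥Opᶜ → B ⊕ O := fun j => Sum.inr (j : O) with her
  set ep : ↥Op → B ⊕ O := fun j => Sum.inr (j : O) with hep
  have hpinj : Function.Injective p := Subtype.coe_injective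
  have hrinj : Function.Injective (fun j : ↥Opᶜ => (j : O)) := Subtype.coe_injective
  have herinj : Function.Injective er := fun a b h => Subtype.coe_injective (Sum.inr_injective h)
  have hepinj : Function.Injective ep := fun a b h => Subtype.coe_injective (Sum.inr_injective h)
  have hfinj : Function.Injective (Sum.map (id : B → B) p) :=
    Function.Injective.sumMap Function.injective_id hpinj
  -- the reindexing equivalence
  set e1 : (↥Op ⊕ ↥Opᶜ) ≃ O :=
    ((Equiv.refl ↥Op).sumCongr (Equiv.subtypeEquivRight fun o => Finset.mem_compl)).trans
      (Equiv.sumCompl (· ∈ Op)) with he1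
  set σ : ((B ⊕ ↥Op) ⊕ ↥Opᶜ) ≃ (B ⊕ O) :=
    (Equiv.sumAssoc B ↥Op ↥Opᶜ).trans ((Equiv.refl B).sumCongr e1) with hσ
  have hσinj : Function.Injective σ := σ.injective
  -- matrices
  set S : Matrix (B ⊕ O) (B ⊕ O) ℝ := K⁻¹ with hSdef
  set K' : Matrix (B ⊕ ↥Op) (B ⊕ ↥Op) ℝ := K.submatrix (Sum.map id p) (Sum.map id p) with hK'def
  set T : Matrix (B ⊕ ↥Op) (B ⊕ ↥Op) ℝ := K'⁻¹ with hTdef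
  set Kσ : Matrix ((B ⊕ ↥Op) ⊕ ↥Opᶜ) ((B ⊕ ↥Op) ⊕ ↥Opᶜ) ℝ := K.submatrix σ σ with hKσdef
  set Sσ : Matrix ((B ⊕ ↥Op) ⊕ ↥Opᶜ) ((B ⊕ ↥Op) ⊕ ↥Opᶜ) ℝ := S.submatrix σ σ with hSσdef
  set G : Matrix B ↥Opᶜ ℝ := S.submatrix Sum.inl er with hGdef
  set GR : Matrix ↥Opᶜ B ℝ := S.submatrix er Sum.inl with hGRdef
  set H : Matrix ↥Opᶜ ↥Opᶜ ℝ := S.submatrix er er with hHdef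
  set HOp : Matrix ↥Opᶜ ↥Op ℝ := S.submatrix er ep with hHOpdef
  set SBp : Matrix B ↥Op ℝ := S.submatrix Sum.inl ep with hSBpdef
  -- block identifications for the reindexed matrices
  have hσ11 : Kσ.toBlocks₁₁ = K' := by ext x y; cases x <;> cases y <;> rfl
  have hσ12 : Kσ.toBlocks₁₂ = K.submatrix (Sum.map id p) er := by ext x y; cases x <;> rfl
  have hσ21 : Kσ.toBlocks₂₁ = K.submatrix er (Sum.map id p) := by ext x y; cases y <;> rfl
  have hσ22 : Kσ.toBlocks₂₂ = K.submatrix er er := by ext x y; rfl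
  have hsσ11 : Sσ.toBlocks₁₁ = S.submatrix (Sum.map id p) (Sum.map id p) := by
    ext x y; cases x <;> cases y <;> rfl
  have hsσ12 : Sσ.toBlocks₁₂ = S.submatrix (Sum.map id p) er := by ext x y; cases x <;> rfl
  have hsσ21 : Sσ.toBlocks₂₁ = S.submatrix er (Sum.map id p) := by ext x y; cases y <;> rfl
  have hsσ22 : Sσ.toBlocks₂₂ = H := by ext x y; rfl
  -- positive definiteness
  have hKpd : K.PosDef := posDef_of_lo hm hKlo
  have hKunit : IsUnit K := hKpd.isUnit
  have hSpd : S.PosDef := hKpd.inv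
  have hSunit : IsUnit S := hSpd.isUnit
  have hKOpd : (K.toBlocks₂₂).PosDef := by
    have : K.toBlocks₂₂ = K.submatrix Sum.inr Sum.inr := rfl
    rw [this]; exact posDef_of_lo_submatrix hm hKlo Sum.inr_injective
  have hK'pd : K'.PosDef := posDef_of_lo_submatrix hm hKlo hfinj
  have hK'unit : IsUnit K' := hK'pd.isUnit
  have hK'Opd : (K'.toBlocks₂₂).PosDef := by
    have : K'.toBlocks₂₂ = K.submatrix (fun i : ↥Op => Sum.inr (p i)) (fun j : ↥Op => Sum.inr (p j)) := rfl
    rw [this]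
    exact posDef_of_lo_submatrix hm hKlo (fun a b h => hpinj (Sum.inr_injective h))
  have hKσpd : Kσ.PosDef := posDef_of_lo_submatrix hm hKlo hσinj
  have hKσunit : IsUnit Kσ := hKσpd.isUnit
  have hSσKσ : Sσ = Kσ⁻¹ := by rw [hSσdef, hKσdef, hSdef, Matrix.inv_submatrix_equiv]
  have hSσpd : Sσ.PosDef := hSσKσ ▸ hKσpd.inv
  have hSσunit : IsUnit Sσ := hSσpd.isUnit
  -- Application (a): blocks of S = K⁻¹
  obtain ⟨hWunit, hS11, hS12⟩ :=
    inv_blocks_of_isUnit K hKunit hKOpd.isUnit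
  set W : Matrix B B ℝ := K.toBlocks₁₁ - K.toBlocks₁₂ * (K.toBlocks₂₂)⁻¹ * K.toBlocks₂₁ with hWdef
  have hWdet : IsUnit W.det := (Matrix.isUnit_iff_isUnit_det W).mp hWunit
  have hSBinv : (S.toBlocks₁₁)⁻¹ = W := by
    rw [hS11, Matrix.nonsing_inv_nonsing_inv W hWdet]
  have hSBunit : IsUnit (S.toBlocks₁₁) := by
    rw [hS11]; exact Matrix.isUnit_nonsing_inv_iff.mpr hWunit
  have hSBdet : IsUnit (S.toBlocks₁₁).det := (Matrix.isUnit_iff_isUnit_det _).mp hSBunit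
  have hQ : K.toBlocks₁₂ * (K.toBlocks₂₂)⁻¹ = -((S.toBlocks₁₁)⁻¹ * S.toBlocks₁₂) := by
    rw [hSBinv, hS12, Matrix.mul_neg, neg_neg, Matrix.mul_assoc W⁻¹,
      Matrix.mul_nonsing_inv_cancel_left W _ hWdet]
  -- norm bound for W
  have hWpsd : W.PosSemidef := by
    rw [← hSBinv]
    have h1 : (S.toBlocks₁₁).PosSemidef := by
      have : S.toBlocks₁₁ = S.submatrix Sum.inl Sum.inl := rfl
      rw [this]; exact hSpd.posSemidef.submatrix Sum.inl
    exact h1.inv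
  have hKhi11 : (M • (1 : Matrix B B ℝ) - K.toBlocks₁₁).PosSemidef := by
    have := hKhi.submatrix Sum.inl
    rwa [smul_one_sub_submatrix K M Sum.inl_injective] at this
  have h21K : K.toBlocks₂₁ = (K.toBlocks₁₂)ᴴ := toBlocks21_eq_conj K hKpd.isHermitian
  have hconj : (K.toBlocks₁₂ * (K.toBlocks₂₂)⁻¹ * K.toBlocks₂₁).PosSemidef := by
    rw [h21K]
    exact (hKOpd.inv.posSemidef).mul_mul_conjTranspose_same K.toBlocks₁₂
  have hWhi : (M • (1 : Matrix B B ℝ) - W).PosSemidef := by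
    have hexp : M • (1 : Matrix B B ℝ) - W
        = (M • (1 : Matrix B B ℝ) - K.toBlocks₁₁)
          + K.toBlocks₁₂ * (K.toBlocks₂₂)⁻¹ * K.toBlocks₂₁ := by
      rw [hWdef]; abel
    rw [hexp]; exact hKhi11.add hconj
  have hWnorm : ‖W‖ ≤ M := norm_le_of_psd hWpsd hM.le hWhi
  -- Application (b): blocks of T = K'⁻¹
  obtain ⟨hW'unit, hT11e, hT12e⟩ :=
    inv_blocks_of_isUnit K' hK'unit hK'Opd.isUnit
  set W' : Matrix B B ℝ := K'.toBlocks₁₁ - K'.toBlocks₁₂ * (K'.toBlocks₂₂)⁻¹ * K'.toBlocks₂₁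
    with hW'def
  have hW'det : IsUnit W'.det := (Matrix.isUnit_iff_isUnit_det W').mp hW'unit
  have hT11 : T.toBlocks₁₁ = W'⁻¹ := by rw [hTdef]; exact hT11e
  have hT11inv : (T.toBlocks₁₁)⁻¹ = W' := by
    rw [hT11, Matrix.nonsing_inv_nonsing_inv W' hW'det]
  have hT11unit : IsUnit (T.toBlocks₁₁) := by
    rw [hT11]; exact Matrix.isUnit_nonsing_inv_iff.mpr hW'unit
  have hT11det : IsUnit (T.toBlocks₁₁).det := (Matrix.isUnit_iff_isUnit_det _).mp hT11unit
  have hP : K'.toBlocks₁₂ * (K'.toBlocks₂₂)⁻¹ = -((T.toBlocks₁₁)⁻¹ * T.toBlocks₁₂) := by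
    rw [hT11inv, hTdef, hT12e, Matrix.mul_neg, neg_neg, Matrix.mul_assoc W'⁻¹,
      Matrix.mul_nonsing_inv_cancel_left W' _ hW'det]
  -- norm bound for W'
  have hW'psd : W'.PosSemidef := by
    rw [← hT11inv]
    have h1 : (T.toBlocks₁₁).PosSemidef := by
      have h0 : T.toBlocks₁₁ = T.submatrix Sum.inl Sum.inl := rfl
      rw [h0, hTdef]; exact hK'pd.inv.posSemidef.submatrix Sum.inl
    exact h1.inv
  have hK'hi : (M • (1 : Matrix (B ⊕ ↥Op) (B ⊕ ↥Op) ℝ) - K').PosSemidef := by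
    have := hKhi.submatrix (Sum.map id p)
    rwa [smul_one_sub_submatrix K M hfinj] at this
  have hK'hi11 : (M • (1 : Matrix B B ℝ) - K'.toBlocks₁₁).PosSemidef := by
    have := hK'hi.submatrix Sum.inl
    rwa [smul_one_sub_submatrix K' M Sum.inl_injective] at this
  have h21K' : K'.toBlocks₂₁ = (K'.toBlocks₁₂)ᴴ := toBlocks21_eq_conj K' hK'pd.isHermitian
  have hconj' : (K'.toBlocks₁₂ * (K'.toBlocks₂₂)⁻¹ * K'.toBlocks₂₁).PosSemidef := by
    rw [h21K']
    exact (hK'Opd.inv.posSemidef).mul_mul_conjTranspose_same K'.toBlocks₁₂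
  have hW'hi : (M • (1 : Matrix B B ℝ) - W').PosSemidef := by
    have hexp : M • (1 : Matrix B B ℝ) - W'
        = (M • (1 : Matrix B B ℝ) - K'.toBlocks₁₁)
          + K'.toBlocks₁₂ * (K'.toBlocks₂₂)⁻¹ * K'.toBlocks₂₁ := by
      rw [hW'def]; abel
    rw [hexp]; exact hK'hi11.add hconj'
  have hW'norm : ‖W'‖ ≤ M := norm_le_of_psd hW'psd hM.le hW'hi
  -- Application (d): S_R via Kσ
  have hKσ11unit : IsUnit Kσ.toBlocks₁₁ := by rw [hσ11]; exact hK'unit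
  obtain ⟨hZunit, hZ22⟩ := inv_blocks22_of_isUnit Kσ hKσunit hKσ11unit
  set Z : Matrix ↥Opᶜ ↥Opᶜ ℝ :=
    Kσ.toBlocks₂₂ - Kσ.toBlocks₂₁ * (Kσ.toBlocks₁₁)⁻¹ * Kσ.toBlocks₁₂ with hZdef
  have hZdet : IsUnit Z.det := (Matrix.isUnit_iff_isUnit_det Z).mp hZunit
  rw [← hSσKσ, hsσ22] at hZ22
  -- hZ22 : H = Z⁻¹
  have hHinv : H⁻¹ = Z := by rw [hZ22, Matrix.nonsing_inv_nonsing_inv Z hZdet]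
  have hHunit : IsUnit H := by rw [hZ22]; exact Matrix.isUnit_nonsing_inv_iff.mpr hZunit
  have hHdet : IsUnit H.det := (Matrix.isUnit_iff_isUnit_det _).mp hHunit
  have hZpsd : Z.PosSemidef := by
    rw [← hHinv]
    have h1 : H.PosSemidef := by rw [hHdef]; exact hSpd.posSemidef.submatrix er
    exact h1.inv
  have hKσ11pd : (Kσ.toBlocks₁₁).PosDef := by rw [hσ11]; exact hK'pd
  have h21Kσ : Kσ.toBlocks₂₁ = (Kσ.toBlocks₁₂)ᴴ := toBlocks21_eq_conj Kσ hKσpd.isHermitian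
  have hconjσ : (Kσ.toBlocks₂₁ * (Kσ.toBlocks₁₁)⁻¹ * Kσ.toBlocks₁₂).PosSemidef := by
    rw [h21Kσ]
    exact (hKσ11pd.inv.posSemidef).conjTranspose_mul_mul_same Kσ.toBlocks₁₂
  have hKσhi22 : (M • (1 : Matrix ↥Opᶜ ↥Opᶜ ℝ) - Kσ.toBlocks₂₂).PosSemidef := by
    have h0 : Kσ.toBlocks₂₂ = K.submatrix er er := hσ22
    rw [h0]
    have := hKhi.submatrix er
    rwa [smul_one_sub_submatrix K M herinj] at this
  have hZhi : (M • (1 : Matrix ↥Opᶜ ↥Opᶜ ℝ) - Z).PosSemidef := by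
    have hexp : M • (1 : Matrix ↥Opᶜ ↥Opᶜ ℝ) - Z
        = (M • (1 : Matrix ↥Opᶜ ↥Opᶜ ℝ) - Kσ.toBlocks₂₂)
          + Kσ.toBlocks₂₁ * (Kσ.toBlocks₁₁)⁻¹ * Kσ.toBlocks₁₂ := by
      rw [hZdef]; abel
    rw [hexp]; exact hKσhi22.add hconjσ
  have hZnorm : ‖Z‖ ≤ M := norm_le_of_psd hZpsd hM.le hZhi
  -- Application (c): T in terms of S
  have hSσ22unit : IsUnit Sσ.toBlocks₂₂ := by rw [hsσ22]; exact hHunit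
  obtain ⟨hT'unit, hSσ11e, _⟩ := inv_blocks_of_isUnit Sσ hSσunit hSσ22unit
  set T' : Matrix (B ⊕ ↥Op) (B ⊕ ↥Op) ℝ :=
    Sσ.toBlocks₁₁ - Sσ.toBlocks₁₂ * (Sσ.toBlocks₂₂)⁻¹ * Sσ.toBlocks₂₁ with hT'def
  have hT'det : IsUnit T'.det := (Matrix.isUnit_iff_isUnit_det T').mp hT'unit
  have hKσdet : IsUnit Kσ.det := (Matrix.isUnit_iff_isUnit_det Kσ).mp hKσunit
  have hSσinv : Sσ⁻¹ = Kσ := by rw [hSσKσ, Matrix.nonsing_inv_nonsing_inv Kσ hKσdet]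
  rw [hSσinv, hσ11] at hSσ11e
  -- hSσ11e : K' = T'⁻¹
  have hTT' : T = T' := by
    rw [hTdef, hSσ11e, Matrix.nonsing_inv_nonsing_inv T' hT'det]
  have hT11S : T.toBlocks₁₁ = S.toBlocks₁₁ - G * (H⁻¹ * GR) := by
    rw [hTT', hT'def, hsσ11, hsσ12, hsσ21, hsσ22]
    have h0 : ∀ (A : Matrix (B ⊕ ↥Op) (B ⊕ ↥Op) ℝ), A.toBlocks₁₁ = A.submatrix Sum.inl Sum.inl :=
      fun _ => rfl
    rw [h0]
    have hsub : ∀ (X Y : Matrix (B ⊕ ↥Op) (B ⊕ ↥Op) ℝ) (f g : B → B ⊕ ↥Op),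
        (X - Y).submatrix f g = X.submatrix f g - Y.submatrix f g := fun _ _ _ _ => rfl
    rw [hsub]
    congr 1
    rw [Matrix.mul_assoc, submatrix_mul_split, submatrix_mul_split H⁻¹ _ id Sum.inl,
      Matrix.submatrix_id_id, Matrix.submatrix_submatrix, Matrix.submatrix_submatrix]
    rfl
  have hT12S : T.toBlocks₁₂ = SBp - G * (H⁻¹ * HOp) := by
    rw [hTT', hT'def, hsσ11, hsσ12, hsσ21, hsσ22]
    have h0 : ∀ (A : Matrix (B ⊕ ↥Op) (B ⊕ ↥Op) ℝ), A.toBlocks₁₂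
        = A.submatrix Sum.inl Sum.inr := fun _ => rfl
    rw [h0]
    have hsub : ∀ (X Y : Matrix (B ⊕ ↥Op) (B ⊕ ↥Op) ℝ) (f : B → B ⊕ ↥Op)
        (g : ↥Op → B ⊕ ↥Op),
        (X - Y).submatrix f g = X.submatrix f g - Y.submatrix f g := fun _ _ _ _ => rfl
    rw [hsub]
    congr 1
    rw [Matrix.mul_assoc, submatrix_mul_split, submatrix_mul_split H⁻¹ _ id Sum.inr,
      Matrix.submatrix_id_id, Matrix.submatrix_submatrix, Matrix.submatrix_submatrix]
    rfl
  -- Application (e): K_O⁻¹ as Schur complement of S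
  obtain ⟨hYunit, hY22⟩ := inv_blocks22_of_isUnit S hSunit hSBunit
  set Y : Matrix O O ℝ :=
    S.toBlocks₂₂ - S.toBlocks₂₁ * (S.toBlocks₁₁)⁻¹ * S.toBlocks₁₂ with hYdef
  have hYdet : IsUnit Y.det := (Matrix.isUnit_iff_isUnit_det Y).mp hYunit
  have hKdet : IsUnit K.det := (Matrix.isUnit_iff_isUnit_det K).mp hKunit
  have hSinvK : S⁻¹ = K := by rw [hSdef, Matrix.nonsing_inv_nonsing_inv K hKdet]
  rw [hSinvK] at hY22
  -- hY22 : K.toBlocks₂₂ = Y⁻¹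
  have hKOinvY : (K.toBlocks₂₂)⁻¹ = Y := by
    rw [hY22, Matrix.nonsing_inv_nonsing_inv Y hYdet]
  set Xm : Matrix ↥Opᶜ ↥Op ℝ := HOp - GR * ((S.toBlocks₁₁)⁻¹ * SBp) with hXmdef
  have hXsub : (K.toBlocks₂₂)⁻¹.submatrix (fun j : ↥Opᶜ => (j : O)) p = Xm := by
    rw [hKOinvY, hYdef]
    have hsub : ∀ (X Y' : Matrix O O ℝ) (f : ↥Opᶜ → O) (g : ↥Op → O),
        (X - Y').submatrix f g = X.submatrix f g - Y'.submatrix f g := fun _ _ _ _ => rfl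
    rw [hsub]
    congr 1
    rw [Matrix.mul_assoc, submatrix_mul_split, submatrix_mul_split (S.toBlocks₁₁)⁻¹ _ id p,
      Matrix.submatrix_id_id]
    rfl
  have hKOlo : (K.toBlocks₂₂ - m • (1 : Matrix O O ℝ)).PosSemidef := by
    have h0 : K.toBlocks₂₂ = K.submatrix Sum.inr Sum.inr := rfl
    rw [h0]
    have := hKlo.submatrix Sum.inr
    rwa [sub_smul_one_submatrix K m Sum.inr_injective] at this
  have hXnorm : ‖Xm‖ ≤ 1 / m := by
    rw [← hXsub]
    calc ‖(K.toBlocks₂₂)⁻¹.submatrix (fun j : ↥Opᶜ => (j : O)) p‖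
        ≤ ‖(K.toBlocks₂₂)⁻¹‖ := norm_submatrix_le _ hrinj hpinj
      _ ≤ 1 / m := norm_inv_le_of_lo hm hKOlo
  -- decompose Δ
  have hDp : Δ.submatrix id p = K'.toBlocks₁₂ * (K'.toBlocks₂₂)⁻¹
      - (K.toBlocks₁₂ * (K.toBlocks₂₂)⁻¹).submatrix id p := by
    ext b j
    rw [hΔ]
    simp only [Matrix.submatrix_apply, Matrix.of_apply, id_eq, Matrix.sub_apply]
    rw [dif_pos j.2]
    rfl
  have hDr : Δ.submatrix id (fun j : ↥Opᶜ => (j : O))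
      = -((K.toBlocks₁₂ * (K.toBlocks₂₂)⁻¹).submatrix id (fun j : ↥Opᶜ => (j : O))) := by
    ext b j
    rw [hΔ]
    simp only [Matrix.submatrix_apply, Matrix.of_apply, id_eq, Matrix.sub_apply,
      Matrix.neg_apply]
    rw [dif_neg (Finset.mem_compl.mp j.2), zero_sub]
    rfl
  have hsplitQr : (K.toBlocks₁₂ * (K.toBlocks₂₂)⁻¹).submatrix id (fun j : ↥Opᶜ => (j : O))
      = -((S.toBlocks₁₁)⁻¹ * G) := by
    rw [hQ]
    have hneg : ∀ (A : Matrix B O ℝ) (g : ↥Opᶜ → O),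
        (-A).submatrix id g = -(A.submatrix id g) := fun _ _ => rfl
    rw [hneg]
    rfl
  have hsplitQp : (K.toBlocks₁₂ * (K.toBlocks₂₂)⁻¹).submatrix id p
      = -((S.toBlocks₁₁)⁻¹ * SBp) := by
    rw [hQ]
    have hneg : ∀ (A : Matrix B O ℝ) (g : ↥Op → O),
        (-A).submatrix id g = -(A.submatrix id g) := fun _ _ => rfl
    rw [hneg]
    rfl
  have hDr2 : Δ.submatrix id (fun j : ↥Opᶜ => (j : O)) = (S.toBlocks₁₁)⁻¹ * G := by
    rw [hDr, hsplitQr, neg_neg]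
  have hDp2 : Δ.submatrix id p
      = (S.toBlocks₁₁)⁻¹ * SBp - (T.toBlocks₁₁)⁻¹ * T.toBlocks₁₂ := by
    rw [hDp, hP, hsplitQp, neg_sub_neg]
  -- the key algebraic identity
  have c1 : S.toBlocks₁₁ * ((S.toBlocks₁₁)⁻¹ * SBp) = SBp :=
    Matrix.mul_nonsing_inv_cancel_left _ _ hSBdet
  have c2 : T.toBlocks₁₁ * ((T.toBlocks₁₁)⁻¹ * T.toBlocks₁₂) = T.toBlocks₁₂ :=
    Matrix.mul_nonsing_inv_cancel_left _ _ hT11det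
  have hcalc : T.toBlocks₁₁ * Δ.submatrix id p = G * (H⁻¹ * Xm) := by
    rw [hDp2, Matrix.mul_sub, c2, hT11S, hT12S, Matrix.sub_mul, c1, hXmdef,
      Matrix.mul_sub H⁻¹ HOp (GR * ((S.toBlocks₁₁)⁻¹ * SBp)), Matrix.mul_sub G,
      Matrix.mul_assoc G (H⁻¹ * GR) ((S.toBlocks₁₁)⁻¹ * SBp),
      Matrix.mul_assoc H⁻¹ GR ((S.toBlocks₁₁)⁻¹ * SBp)]
    abel
  have hDpfin : Δ.submatrix id p = (T.toBlocks₁₁)⁻¹ * (G * (H⁻¹ * Xm)) := by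
    rw [← hcalc, Matrix.nonsing_inv_mul_cancel_left _ _ hT11det]
  -- norms
  have hSB11norm : ‖(S.toBlocks₁₁)⁻¹‖ ≤ M := by rw [hSBinv]; exact hWnorm
  have hT11norm : ‖(T.toBlocks₁₁)⁻¹‖ ≤ M := by rw [hT11inv]; exact hW'norm
  have hHnorm : ‖H⁻¹‖ ≤ M := by rw [hHinv]; exact hZnorm
  have hGn : (0:ℝ) ≤ ‖G‖ := norm_nonneg _
  have hnormDr : ‖Δ.submatrix id (fun j : ↥Opᶜ => (j : O))‖ ≤ M * ‖G‖ := by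
    rw [hDr2]
    calc ‖(S.toBlocks₁₁)⁻¹ * G‖ ≤ ‖(S.toBlocks₁₁)⁻¹‖ * ‖G‖ := Matrix.l2_opNorm_mul _ _
      _ ≤ M * ‖G‖ := mul_le_mul_of_nonneg_right hSB11norm hGn
  have hnormDp : ‖Δ.submatrix id p‖ ≤ M * (‖G‖ * (M * (1 / m))) := by
    rw [hDpfin]
    have s1 : ‖H⁻¹ * Xm‖ ≤ M * (1 / m) := by
      calc ‖H⁻¹ * Xm‖ ≤ ‖H⁻¹‖ * ‖Xm‖ := Matrix.l2_opNorm_mul _ _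
        _ ≤ M * (1 / m) := mul_le_mul hHnorm hXnorm (norm_nonneg _) hM.le
    have s2 : ‖G * (H⁻¹ * Xm)‖ ≤ ‖G‖ * (M * (1 / m)) := by
      calc ‖G * (H⁻¹ * Xm)‖ ≤ ‖G‖ * ‖H⁻¹ * Xm‖ := Matrix.l2_opNorm_mul _ _
        _ ≤ ‖G‖ * (M * (1 / m)) := mul_le_mul_of_nonneg_left s1 hGn
    calc ‖(T.toBlocks₁₁)⁻¹ * (G * (H⁻¹ * Xm))‖
        ≤ ‖(T.toBlocks₁₁)⁻¹‖ * ‖G * (H⁻¹ * Xm)‖ := Matrix.l2_opNorm_mul _ _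
      _ ≤ M * (‖G‖ * (M * (1 / m))) := mul_le_mul hT11norm s2 (norm_nonneg _) hM.le
  -- assemble
  have hcov : ∀ o : O, (∃ j : ↥Op, p j = o) ∨ (∃ j : ↥Opᶜ, (j : O) = o) := by
    intro o
    by_cases h : o ∈ Op
    · exact Or.inl ⟨⟨o, h⟩, rfl⟩
    · exact Or.inr ⟨⟨o, Finset.mem_compl.mpr h⟩, rfl⟩
  have hdis : ∀ o : O, (∃ j : ↥Op, p j = o) → (∃ j : ↥Opᶜ, (j : O) = o) → False := by
    rintro o ⟨j, hj⟩ ⟨j', hj'⟩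
    exact (Finset.mem_compl.mp (hj' ▸ j'.2)) (hj ▸ j.2)
  have hsplit := norm_le_col_split Δ hpinj hrinj hcov hdis
  have hGoal : l2OpNorm Δ ≤ (M ^ 2 / m + M) * l2OpNorm G := by
    rw [l2OpNorm_eq_norm, l2OpNorm_eq_norm]
    have harith : M * (‖G‖ * (M * (1 / m))) + M * ‖G‖ = (M ^ 2 / m + M) * ‖G‖ := by
      field_simp
    linarith [hsplit, hnormDp, hnormDr]
  exact hGoal
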